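/- Let U be a (G,H)-biset, V an (H,K)-biset, with U × V viewed as an H-set via h·(u,v) = (uh⁻¹, hv), and let [u,v] denote the H-orbit of (u,v) in U ×_H V. Then the stabilizer of [u,v] in G × K equals the star product of the stabilizers: (G × K)_{[u,v]} = (G × H)_u * (H × K)_v. -/

import Mathlib

/-- The star product `D * E := {(g,k) | ∃ h, (g,h) ∈ D ∧ (h,k) ∈ E}`. -/
def starSub {G H K : Type*} [Group G] [Group H] [Group K]
    (D : Subgroup (G × H)) (E : Subgroup (H × K)) : Subgroup (G × K) where
  carrier := {p | ∃ h : H, (p.1, h) ∈ D ∧ (h, p.2) ∈ E}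
  one_mem' := ⟨1, D.one_mem, E.one_mem⟩
  mul_mem' := fun ⟨h, hD, hE⟩ ⟨h', hD', hE'⟩ =>
    ⟨h * h', D.mul_mem hD hD', E.mul_mem hE hE'⟩
  inv_mem' := fun ⟨h, hD, hE⟩ => ⟨h⁻¹, D.inv_mem hD, E.inv_mem hE⟩

section Tensor

variable (G H K : Type*) [Group G] [Group H] [Group K]
variable (U V : Type*) [MulAction (G × H) U] [MulAction (H × K) V]

/-- The setoid on `U × V` whose classes are the `H`-orbits for `h • (u,v) = (u h⁻¹, h v)`;
here a `(G,H)`-biset `U` is encoded as a `(G × H)`-set via `(g,h) • u = g u h⁻¹`, so that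
`u h⁻¹ = (1,h) • u` and `h v = (h,1) • v`. -/
def tensorSetoid : Setoid (U × V) where
  r p q := ∃ h : H, p.1 = ((1, h) : G × H) • q.1 ∧ p.2 = ((h, 1) : H × K) • q.2
  iseqv := by
    constructor
    · intro p
      exact ⟨1, by simp [Prod.mk_one_one], by simp [Prod.mk_one_one]⟩
    · rintro p q ⟨h, h1, h2⟩
      refine ⟨h⁻¹, ?_, ?_⟩ <;>
        simp [h1, h2, smul_smul, Prod.mk_mul_mk, Prod.mk_one_one]
    · rintro p q r ⟨h, h1, h2⟩ ⟨h', h1', h2'⟩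
      refine ⟨h * h', ?_, ?_⟩ <;>
        simp [h1, h2, h1', h2', smul_smul, Prod.mk_mul_mk]

/-- The biset tensor product `U ×_H V`: the set of `H`-orbits of `U × V`. -/
def Tensor : Type _ := Quotient (tensorSetoid G H K U V)

/-- The class `[u, v] ∈ U ×_H V`. -/
def tmk (p : U × V) : Tensor G H K U V := Quotient.mk (tensorSetoid G H K U V) p

/-- The `(G,K)`-biset structure on `U ×_H V`, i.e. the `(G × K)`-action
`(g,k) • [u,v] = [g u, v k⁻¹] = [(g,1) • u, (1,k) • v]`. -/
instance : MulAction (G × K) (Tensor G H K U V) where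
  smul a := Quotient.map
    (fun p => (((a.1, 1) : G × H) • p.1, ((1, a.2) : H × K) • p.2))
    (by
      rintro p q ⟨h, h1, h2⟩
      exact ⟨h, by simp [h1, smul_smul, Prod.mk_mul_mk],
        by simp [h2, smul_smul, Prod.mk_mul_mk]⟩)
  one_smul := by
    intro x
    induction x using Quotient.ind
    refine congrArg (Quotient.mk _) ?_
    simp [Prod.mk_one_one]
  mul_smul := by
    intro a b x
    induction x using Quotient.ind
    refine congrArg (Quotient.mk _) ?_
    simp [smul_smul, Prod.mk_mul_mk]

/-- The stabilizer of `[u,v] ∈ U ×_H V` in `G × K` is the star product of the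
stabilizers of `u` in `G × H` and of `v` in `H × K`. -/
theorem stabilizer_tmk [Finite G] [Finite H] [Finite K] [Finite U] [Finite V]
    (u : U) (v : V) :
    MulAction.stabilizer (G × K) (tmk G H K U V (u, v)) =
      starSub (MulAction.stabilizer (G × H) u) (MulAction.stabilizer (H × K) v) := by
  ext ⟨g, k⟩
  have hmem : ((g, k) : G × K) ∈ MulAction.stabilizer (G × K) (tmk G H K U V (u, v)) ↔
      (tensorSetoid G H K U V).r (((g, (1:H)) : G × H) • u, (((1:H), k) : H × K) • v) (u, v) := by
    rw [MulAction.mem_stabilizer_iff]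
    exact Quotient.eq
  rw [hmem]
  constructor
  · rintro ⟨h, h1, h2⟩
    refine ⟨h⁻¹, ?_, ?_⟩
    · have : (((1:G), h) : G × H)⁻¹ • (((g, (1:H)) : G × H) • u) =
          (((1:G), h) : G × H)⁻¹ • ((((1:G), h) : G × H) • u) := by rw [← h1]
      simpa [smul_smul, Prod.mk_mul_mk, Prod.mk_one_one] using this
    · have : ((h, (1:K)) : H × K)⁻¹ • ((((1:H), k) : H × K) • v) =
          ((h, (1:K)) : H × K)⁻¹ • (((h, (1:K)) : H × K) • v) := by rw [← h2]
      simpa [smul_smul, Prod.mk_mul_mk, Prod.mk_one_one] using this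
  · rintro ⟨h, h1, h2⟩
    rw [MulAction.mem_stabilizer_iff] at h1 h2
    refine ⟨h⁻¹, ?_, ?_⟩
    · have : (((1:G), h⁻¹) : G × H) • ((g, h) : G × H) • u = (((1:G), h⁻¹) : G × H) • u := by
        rw [h1]
      simpa [smul_smul, Prod.mk_mul_mk] using this
    · have : ((h⁻¹, (1:K)) : H × K) • ((h, k) : H × K) • v = ((h⁻¹, (1:K)) : H × K) • v := by
        rw [h2]
      simpa [smul_smul, Prod.mk_mul_mk] using this

end Tensor
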